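/- Let N, K be positive integers. For each k ∈ {1,…,K} let H_k be an N×N Hermitian positive semidefinite complex matrix, σ_k > 0, R_k^th ∈ ℝ, c_k ≥ 0, and let W_c, W_0, W_{p,1},…,W_{p,K} be N×N Hermitian positive semidefinite complex matrices satisfying: (i) Re Tr(W_c) + Σ_k Re Tr(W_{p,k}) + Re Tr(W_0) ≤ P_max; (ii) for every k, Σ_j c_j ≤ log₂(1 + Re Tr(H_k W_c)/(Σ_i Re Tr(H_k W_{p,i}) + Re Tr(H_k W_0) + σ_k²)); (iii) for every k, c_k + log₂(1 + Re Tr(H_k W_{p,k})/(Σ_{j≠k} Re Tr(H_k W_{p,j}) + Re Tr(H_k W_0) + σ_k²)) ≥ R_k^th. Then the matrices W_c' = W_c + W_0, W_{p,k}' = W_{p,k}, W_0' = 0 are Hermitian positive semidefinite, satisfy constraints (i), (ii), (iii), and satisfy W_c' + Σ_k W_{p,k}' + W_0' = W_c + Σ_k W_{p,k} + W_0. Consequently, transmitting only communication waveforms achieves the same transmit covariance Q (and hence the same sensing SINR) as transmitting communication plus dedicated sensing waveforms. -/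

import Mathlib

/-!
Statement 4: corollary of Theorem 1 (the choice `ζ_c = 1, ζ_k = 0`).
Any feasible solution transmitting communication plus dedicated sensing
waveforms can be converted, by absorbing the sensing covariance `W_0` into the
common-stream covariance, into a feasible solution transmitting only
communication waveforms with the same total transmit covariance `Q` (and hence
the same sensing SINR).
-/

open Matrix
open scoped ComplexOrder

lemma tr_mul_re_nonneg {n : ℕ} (A B : Matrix (Fin n) (Fin n) ℂ)
    (hA : A.PosSemidef) (hB : B.PosSemidef) : 0 ≤ (A * B).trace.re := by
  obtain ⟨C, rfl⟩ : ∃ C : Matrix (Fin n) (Fin n) ℂ, B = Cᴴ * C := by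
    open scoped MatrixOrder Matrix.Norms.L2Operator in
    exact CStarAlgebra.nonneg_iff_eq_star_mul_self.mp hB.nonneg
  have h1 : (A * (Cᴴ * C)).trace = (C * A * Cᴴ).trace := by
    rw [← mul_assoc, Matrix.trace_mul_cycle]
  have hP : (C * A * Cᴴ).PosSemidef := hA.mul_mul_conjTranspose_same C
  rw [h1, Matrix.trace]
  simp only [Complex.re_sum]
  apply Finset.sum_nonneg
  intro i _
  have := hP.dotProduct_mulVec_nonneg (Pi.single i 1)
  simp [Matrix.mulVec_single, Matrix.diag, dotProduct, Pi.single_apply, apply_ite] at this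
  simpa [Matrix.diag] using (Complex.le_def.mp this).1

theorem dedicated_sensing_waveform_unnecessary
    (N K : ℕ) (hN : 0 < N) (hK : 0 < K)
    (Pmax : ℝ) (hP : 0 < Pmax)
    (H : Fin K → Matrix (Fin N) (Fin N) ℂ) (hH : ∀ k, (H k).PosSemidef)
    (σ : Fin K → ℝ) (hσ : ∀ k, 0 < σ k)
    (Rth : Fin K → ℝ)
    (c : Fin K → ℝ) (hc : ∀ k, 0 ≤ c k)
    (Wc W0 : Matrix (Fin N) (Fin N) ℂ)
    (Wp : Fin K → Matrix (Fin N) (Fin N) ℂ)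
    (hWc : Wc.PosSemidef) (hW0 : W0.PosSemidef) (hWp : ∀ k, (Wp k).PosSemidef)
    -- (i) power constraint
    (hpow : Wc.trace.re + ∑ k, (Wp k).trace.re + W0.trace.re ≤ Pmax)
    -- (ii) common-stream rate constraint
    (hcom : ∀ k, ∑ j, c j ≤
      Real.logb 2 (1 + (H k * Wc).trace.re /
        (∑ i, (H k * Wp i).trace.re + (H k * W0).trace.re + σ k ^ 2)))
    -- (iii) private-stream rate constraint
    (hpriv : ∀ k, c k +
      Real.logb 2 (1 + (H k * Wp k).trace.re /
        (∑ j ∈ Finset.univ.erase k, (H k * Wp j).trace.re +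
          (H k * W0).trace.re + σ k ^ 2)) ≥ Rth k) :
    -- the communication-only matrices are Hermitian positive semidefinite
    (Wc + W0).PosSemidef ∧
    (∀ k, (Wp k).PosSemidef) ∧
    (0 : Matrix (Fin N) (Fin N) ℂ).PosSemidef ∧
    -- (i) power constraint still holds
    (Wc + W0).trace.re + ∑ k, (Wp k).trace.re +
      (0 : Matrix (Fin N) (Fin N) ℂ).trace.re ≤ Pmax ∧
    -- (ii) common-stream rate constraint still holds
    (∀ k, ∑ j, c j ≤
      Real.logb 2 (1 + (H k * (Wc + W0)).trace.re /
        (∑ i, (H k * Wp i).trace.re +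
          (H k * (0 : Matrix (Fin N) (Fin N) ℂ)).trace.re + σ k ^ 2))) ∧
    -- (iii) private-stream rate constraint still holds
    (∀ k, c k +
      Real.logb 2 (1 + (H k * Wp k).trace.re /
        (∑ j ∈ Finset.univ.erase k, (H k * Wp j).trace.re +
          (H k * (0 : Matrix (Fin N) (Fin N) ℂ)).trace.re + σ k ^ 2)) ≥
        Rth k) ∧
    -- the total transmit covariance is unchanged
    (Wc + W0) + ∑ k, Wp k + (0 : Matrix (Fin N) (Fin N) ℂ)
      = Wc + ∑ k, Wp k + W0 := by

  have hzero : (0 : Matrix (Fin N) (Fin N) ℂ).PosSemidef := Matrix.PosSemidef.zero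
  have hsum : (Wc + W0).PosSemidef := hWc.add hW0
  have htr0 : ∀ k, (H k * (0 : Matrix (Fin N) (Fin N) ℂ)).trace.re = 0 := by
    intro k; simp
  have htradd : ∀ k, (H k * (Wc + W0)).trace.re
      = (H k * Wc).trace.re + (H k * W0).trace.re := by
    intro k; rw [mul_add, Matrix.trace_add, Complex.add_re]
  have hnn : ∀ k, 0 ≤ (H k * W0).trace.re := fun k => tr_mul_re_nonneg _ _ (hH k) hW0
  have hnc : ∀ k, 0 ≤ (H k * Wc).trace.re := fun k => tr_mul_re_nonneg _ _ (hH k) hWc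
  have hnp : ∀ k j, 0 ≤ (H k * Wp j).trace.re := fun k j => tr_mul_re_nonneg _ _ (hH k) (hWp j)
  refine ⟨hsum, hWp, hzero, ?_, ?_, ?_, ?_⟩
  · simp only [Matrix.trace_add, Complex.add_re, Matrix.trace_zero, Complex.zero_re]
    linarith
  · intro k
    refine (hcom k).trans ?_
    have hS : 0 ≤ ∑ i, (H k * Wp i).trace.re := Finset.sum_nonneg fun i _ => hnp k i
    have hs : 0 < σ k ^ 2 := pow_pos (hσ k) 2
    rw [htradd, htr0]
    have hd1 : 0 < ∑ i, (H k * Wp i).trace.re + σ k ^ 2 := by linarith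
    have hd2 : 0 < ∑ i, (H k * Wp i).trace.re + (H k * W0).trace.re + σ k ^ 2 := by
      linarith [hnn k]
    have : (H k * Wc).trace.re / (∑ i, (H k * Wp i).trace.re + (H k * W0).trace.re + σ k ^ 2)
        ≤ ((H k * Wc).trace.re + (H k * W0).trace.re) /
          (∑ i, (H k * Wp i).trace.re + 0 + σ k ^ 2) := by
      rw [add_zero]
      exact div_le_div₀ (by linarith [hnc k, hnn k]) (by linarith [hnn k]) hd1 (by linarith [hnn k])
    apply Real.logb_le_logb_of_le one_lt_two
    · have := div_nonneg (hnc k) hd2.le; linarith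
    · linarith
  · intro k
    refine le_trans (hpriv k) ?_
    have hS : 0 ≤ ∑ j ∈ Finset.univ.erase k, (H k * Wp j).trace.re :=
      Finset.sum_nonneg fun j _ => hnp k j
    have hs : 0 < σ k ^ 2 := pow_pos (hσ k) 2
    rw [htr0]
    have hd1 : 0 < ∑ j ∈ Finset.univ.erase k, (H k * Wp j).trace.re + 0 + σ k ^ 2 := by linarith
    have : (H k * Wp k).trace.re /
        (∑ j ∈ Finset.univ.erase k, (H k * Wp j).trace.re + (H k * W0).trace.re + σ k ^ 2)
        ≤ (H k * Wp k).trace.re /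
        (∑ j ∈ Finset.univ.erase k, (H k * Wp j).trace.re + 0 + σ k ^ 2) := by
      exact div_le_div₀ (hnp k k) le_rfl hd1 (by linarith [hnn k])
    have hd2 : 0 < ∑ j ∈ Finset.univ.erase k, (H k * Wp j).trace.re + (H k * W0).trace.re + σ k ^ 2 := by linarith [hnn k]
    have hlog := Real.logb_le_logb_of_le one_lt_two
      (x := 1 + (H k * Wp k).trace.re / (∑ j ∈ Finset.univ.erase k, (H k * Wp j).trace.re + (H k * W0).trace.re + σ k ^ 2))
      (y := 1 + (H k * Wp k).trace.re / (∑ j ∈ Finset.univ.erase k, (H k * Wp j).trace.re + 0 + σ k ^ 2))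
      (by have := div_nonneg (hnp k k) hd2.le; linarith) (by linarith)
    linarith
  · abel
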